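/- arXiv:2209.02220 — 3 statements merged into one kernel-verified Lean document; each statement's English description precedes it below -/
import Mathlib

section
/- For nonnegative integers n, k and real φ, the noncentral Stirling numbers satisfy S(n, k, φ+1) = (k+1)·S(n, k+1, φ) + S(n, k, φ). -/
open Finset

/-- Noncentral Stirling numbers of the second kind. -/
noncomputable def nS (n k : ℕ) (φ : ℝ) : ℝ :=
  (1 / (Nat.factorial k : ℝ)) *
    ∑ i ∈ Finset.range (k + 1),
      (Nat.choose k i : ℝ) * (-1) ^ (k - i) * ((i : ℝ) + φ) ^ n

lemma sign_aux (k i : ℕ) (h : i ≤ k) : ((-1 : ℝ)) ^ (k - i) = (-1) ^ k * (-1) ^ i := by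
  conv_rhs => rw [← Nat.sub_add_cancel h, pow_add]
  rw [mul_assoc, ← mul_pow]
  norm_num

lemma key_aux (n k : ℕ) (φ : ℝ) :
    ∑ i ∈ Finset.range (k + 2), (Nat.choose (k+1) i : ℝ) * (-1) ^ i * ((i : ℝ) + φ) ^ n
    = ∑ i ∈ Finset.range (k + 1), (Nat.choose k i : ℝ) * (-1) ^ i * ((i : ℝ) + φ) ^ n
      - ∑ i ∈ Finset.range (k + 1), (Nat.choose k i : ℝ) * (-1) ^ i * ((i : ℝ) + (φ + 1)) ^ n := by
  rw [Finset.sum_range_succ' _ (k + 1)]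
  push_cast
  have hsplit : ∀ i ∈ Finset.range (k + 1),
      (Nat.choose (k+1) (i+1) : ℝ) * (-1) ^ (i+1) * (((i:ℝ)+1) + φ) ^ n
      = (Nat.choose k i : ℝ) * (-1) ^ (i+1) * (((i:ℝ)+1) + φ) ^ n
        + (Nat.choose k (i+1) : ℝ) * (-1) ^ (i+1) * (((i:ℝ)+1) + φ) ^ n := by
    intro i _
    rw [Nat.choose_succ_succ]
    push_cast
    ring
  rw [Finset.sum_congr rfl hsplit, Finset.sum_add_distrib]
  have h1 : ∑ i ∈ Finset.range (k + 1),
      (Nat.choose k i : ℝ) * (-1) ^ (i+1) * (((i:ℝ)+1) + φ) ^ n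
      = - ∑ i ∈ Finset.range (k + 1),
        (Nat.choose k i : ℝ) * (-1) ^ i * ((i : ℝ) + (φ + 1)) ^ n := by
    rw [← Finset.sum_neg_distrib]
    apply Finset.sum_congr rfl
    intro i _
    ring_nf
  have h2 : ∑ i ∈ Finset.range (k + 1),
      (Nat.choose k (i+1) : ℝ) * (-1) ^ (i+1) * (((i:ℝ)+1) + φ) ^ n
      = ∑ i ∈ Finset.range (k + 1),
        (Nat.choose k i : ℝ) * (-1) ^ i * ((i : ℝ) + φ) ^ n
        - (Nat.choose k 0 : ℝ) * (-1) ^ 0 * ((0:ℝ) + φ) ^ n := by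
    rw [Finset.sum_range_succ]
    rw [Finset.sum_range_succ' (fun i => (Nat.choose k i : ℝ) * (-1) ^ i * ((i : ℝ) + φ) ^ n) k]
    simp [Nat.choose_succ_self]
  rw [h1, h2]
  simp
  ring

theorem stirling_shift_noncentrality (n k : ℕ) (φ : ℝ) :
    nS n k (φ + 1) = ((k : ℝ) + 1) * nS n (k + 1) φ + nS n k φ := by
  unfold nS
  have hs : ∀ (m : ℕ) (ψ : ℝ),
      ∑ i ∈ Finset.range (m + 1), (Nat.choose m i : ℝ) * (-1) ^ (m - i) * ((i : ℝ) + ψ) ^ n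
      = (-1) ^ m * ∑ i ∈ Finset.range (m + 1),
          (Nat.choose m i : ℝ) * (-1) ^ i * ((i : ℝ) + ψ) ^ n := by
    intro m ψ
    rw [Finset.mul_sum]
    apply Finset.sum_congr rfl
    intro i hi
    rw [sign_aux m i (Nat.lt_succ_iff.mp (Finset.mem_range.mp hi))]
    ring
  rw [hs k (φ + 1), hs k φ]
  have : (k + 1) + 1 = k + 2 := rfl
  rw [show k + 1 + 1 = k + 2 from rfl] at *
  rw [hs (k + 1) φ, key_aux n k φ]
  have hk : (Nat.factorial k : ℝ) ≠ 0 := Nat.cast_ne_zero.mpr (Nat.factorial_ne_zero k)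
  have hk1 : (Nat.factorial (k + 1) : ℝ) = ((k : ℝ) + 1) * (Nat.factorial k : ℝ) := by
    rw [Nat.factorial_succ]; push_cast; ring
  rw [hk1, pow_succ]
  have hk1' : (k : ℝ) + 1 ≠ 0 := by positivity
  field_simp
  ring
end

section
/- For integers 0 ≤ k ≤ min(n, m), the extended occupancy mass function Occ(k|n, m, θ) = C(m, k)·∑_{i=0}^{k} C(k, i)·(−1)^{k−i}·(1 − θ(m−i)/m)^n equals (θ^n/m^n)·(m)_k·S(n, k, m(1−θ)/θ), where (m)_k is the falling factorial and S is the noncentral Stirling number of the second kind (assume 0 < θ ≤ 1). -/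
open Finset

/-- Extended occupancy mass function. -/
noncomputable def Occ (k n m : ℕ) (θ : ℝ) : ℝ :=
  (Nat.choose m k : ℝ) *
    ∑ i ∈ Finset.range (k + 1),
      (Nat.choose k i : ℝ) * (-1) ^ (k - i) * (1 - θ * ((m : ℝ) - i) / m) ^ n

/-- Falling factorial `(t)_k = t (t-1) ⋯ (t-k+1)`. -/
noncomputable def ffall (t : ℝ) (k : ℕ) : ℝ := ∏ i ∈ Finset.range k, (t - (i : ℝ))

theorem occupancy_stirling_form (n m k : ℕ) (hm : 0 < m) (θ : ℝ)
    (hθ0 : 0 < θ) (hθ1 : θ ≤ 1) (hk : k ≤ min n m) :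
    Occ k n m θ =
      θ ^ n / (m : ℝ) ^ n * ffall (m : ℝ) k * nS n k ((m : ℝ) * (1 - θ) / θ) := by
  have hkm : k ≤ m := hk.trans (min_le_right _ _)
  have hm0 : (m : ℝ) ≠ 0 := by positivity
  have hθ : θ ≠ 0 := ne_of_gt hθ0
  -- falling factorial equals choose * factorial
  have hfall : ffall (m : ℝ) k = (Nat.choose m k : ℝ) * (Nat.factorial k : ℝ) := by
    have h1 : ffall (m : ℝ) k = ((Nat.descFactorial m k : ℕ) : ℝ) := by
      rw [Nat.descFactorial_eq_prod_range]
      push_cast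
      unfold ffall
      refine Finset.prod_congr rfl fun i hi => ?_
      rw [Nat.cast_sub ((Finset.mem_range.mp hi).le.trans hkm)]
    rw [h1, Nat.descFactorial_eq_factorial_mul_choose]
    push_cast
    ring
  -- pointwise identity on the summand
  have key : ∀ i ∈ Finset.range (k + 1),
      (Nat.choose k i : ℝ) * (-1) ^ (k - i) * (1 - θ * ((m : ℝ) - i) / m) ^ n
      = (θ ^ n / (m : ℝ) ^ n) *
        ((Nat.choose k i : ℝ) * (-1) ^ (k - i) * ((i : ℝ) + (m : ℝ) * (1 - θ) / θ) ^ n) := by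
    intro i hi
    have h2 : (1 - θ * ((m : ℝ) - i) / m) ^ n
        = (θ / m) ^ n * ((i : ℝ) + (m : ℝ) * (1 - θ) / θ) ^ n := by
      rw [← mul_pow]
      congr 1
      field_simp
      ring
    rw [h2, div_pow]
    ring
  unfold Occ nS
  rw [Finset.sum_congr rfl key, ← Finset.mul_sum, hfall]
  have hfk : (Nat.factorial k : ℝ) ≠ 0 := by positivity
  field_simp
  exact congrArg _ (Finset.sum_congr rfl fun x _ => by ring)
end

section
/- The extended occupancy distribution is a binomial mixture of classical occupancy distributions: for 0 ≤ k ≤ min(n, m), Occ(k|n, m, θ) = ∑_{r=0}^{n} Bin(r|n, θ)·Occ(k|r, m, 1), where Bin(r|n, θ) = C(n, r)·θ^r·(1−θ)^{n−r} and Occ(k|r, m, 1) = (m)_k·S(r, k)/m^r with S(r, k) the central Stirling numbers of the second kind. -/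
open Finset

/-- Central Stirling numbers of the second kind. -/
noncomputable def Stir (r k : ℕ) : ℝ :=
  (1 / (Nat.factorial k : ℝ)) *
    ∑ i ∈ Finset.range (k + 1), (Nat.choose k i : ℝ) * (-1) ^ (k - i) * (i : ℝ) ^ r

theorem occupancy_binomial_mixture (n m k : ℕ) (hm : 0 < m) (hk : k ≤ min n m)
    (θ : ℝ) (hθ0 : 0 < θ) (hθ1 : θ ≤ 1) :
    Occ k n m θ =
      ∑ r ∈ Finset.range (n + 1),
        ((Nat.choose n r : ℝ) * θ ^ r * (1 - θ) ^ (n - r)) *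
          (ffall (m : ℝ) k * Stir r k / (m : ℝ) ^ r) := by
  have hkm : k ≤ m := hk.trans (min_le_right _ _)
  have hm0 : (m : ℝ) ≠ 0 := Nat.cast_ne_zero.mpr hm.ne'
  have hfac : (Nat.factorial k : ℝ) ≠ 0 := Nat.cast_ne_zero.mpr k.factorial_ne_zero
  have hF : ffall (m : ℝ) k = (Nat.factorial k : ℝ) * (Nat.choose m k : ℝ) := by
    have h1 : ffall (m : ℝ) k = ((Nat.descFactorial m k : ℕ) : ℝ) := by
      rw [Nat.descFactorial_eq_prod_range, Nat.cast_prod, ffall]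
      refine Finset.prod_congr rfl fun i hi => ?_
      rw [Nat.cast_sub (((Finset.mem_range.mp hi).le).trans hkm)]
    rw [h1, Nat.descFactorial_eq_factorial_mul_choose, Nat.cast_mul]
  have key : ∀ i : ℕ,
      (1 - θ * ((m : ℝ) - i) / m) ^ n
        = ∑ r ∈ Finset.range (n + 1),
            (Nat.choose n r : ℝ) * θ ^ r * (1 - θ) ^ (n - r) * ((i : ℝ) / m) ^ r := by
    intro i
    have h : (1 : ℝ) - θ * ((m : ℝ) - i) / m = θ * (i : ℝ) / m + (1 - θ) := by
      field_simp; ring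
    rw [h, add_pow]
    refine Finset.sum_congr rfl fun r hr => ?_
    field_simp
    ring
  rw [Occ, Finset.mul_sum]
  simp only [Stir, Finset.mul_sum, Finset.sum_div, hF, key]
  rw [Finset.sum_comm]
  refine Finset.sum_congr rfl fun i hi => ?_
  refine Finset.sum_congr rfl fun r hr => ?_
  field_simp
  have hmi : (m : ℝ) ^ i * ((m : ℝ))⁻¹ ^ i = 1 := by rw [← mul_pow, mul_inv_cancel₀ hm0, one_pow]
  linear_combination ((Nat.choose m k : ℝ) * (Nat.choose k r : ℝ) * (Nat.choose n i : ℝ) * (r : ℝ) ^ i * (1 - θ) ^ (n - i)) * hmi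
end
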